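/- In any j-field (K, D), the k-closure operator kcl satisfies: (a) A ⊆ kcl(A); (b) A ⊆ B implies kcl(A) ⊆ kcl(B); (c) kcl(kcl(A)) = kcl(A); (d) kcl has finite character. -/

import Mathlib

noncomputable section

open scoped Classical

/-- The group `GL₂(ℚ)`. -/
abbrev GL2Q := Matrix.GeneralLinearGroup (Fin 2) ℚ

variable {K : Type*} [Field K] [CharZero K]

/-- Entry of a matrix in `GL₂(ℚ)`. -/
def mEntry (g : GL2Q) (i k : Fin 2) : ℚ := (g : Matrix (Fin 2) (Fin 2) ℚ) i k

/-- Numerator of the fractional linear action. -/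
def moebNum (g : GL2Q) (x : K) : K := (mEntry g 0 0 : K) * x + (mEntry g 0 1 : K)

/-- Denominator of the fractional linear action. -/
def moebDen (g : GL2Q) (x : K) : K := (mEntry g 1 0 : K) * x + (mEntry g 1 1 : K)

/-- The fractional linear (Möbius) action `g·x = (ax+b)/(cx+d)`. -/
def moeb (g : GL2Q) (x : K) : K := moebNum g x / moebDen g x

/-- `MoebRel g x y` holds if the action of `g` at `x` is defined (denominator nonzero)
and `g·x = y`. -/
def MoebRel (g : GL2Q) (x y : K) : Prop := moebDen g x ≠ 0 ∧ moeb g x = y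

/-- The `G`-closure of a set `A ⊆ K`: all elements of the form `g·a`, `a ∈ A`, `g ∈ GL₂(ℚ)`. -/
def Gcl (A : Set K) : Set K := {x | ∃ a ∈ A, ∃ g : GL2Q, MoebRel g a x}

/-- A matrix is scalar if it is a rational multiple of the identity. -/
def IsScalarMat (g : GL2Q) : Prop :=
  ∃ r : ℚ, (g : Matrix (Fin 2) (Fin 2) ℚ) = r • (1 : Matrix (Fin 2) (Fin 2) ℚ)

/-- `IsRed g m`: `m` is the reduced integral form of `g`, i.e. a positive rational
multiple of `g` with coprime integer entries. -/
def IsRed (g : GL2Q) (m : Matrix (Fin 2) (Fin 2) ℤ) : Prop :=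
  (∃ r : ℚ, 0 < r ∧ ∀ i k, (m i k : ℚ) = r * mEntry g i k) ∧
    Int.gcd (Int.gcd (m 0 0) (m 0 1)) (Int.gcd (m 1 0) (m 1 1)) = 1

/-- `DetRed g N`: the determinant of the reduced form of `g` is `N`. -/
def DetRed (g : GL2Q) (N : ℤ) : Prop := ∃ m, IsRed g m ∧ m.det = N

/-- A `j`-field: a field of characteristic zero together with a domain `D` closed under
the `GL₂(ℚ)`-action and functions `j, j', j'', j'''` satisfying the axioms of the
modular `j`-function (the differential equation, the modular-polynomial axioms and the
axiom on the singular values of `j`). -/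
structure JField (K : Type*) [Field K] [CharZero K] where
  D : Set K
  j : K → K
  j' : K → K
  j'' : K → K
  j''' : K → K
  /-- The family of modular polynomials `Φ_N`. -/
  Φ : ℕ → MvPolynomial (Fin 2) ℤ
  D_closed : ∀ z ∈ D, ∀ g : GL2Q, moebDen g z ≠ 0 ∧ moeb g z ∈ D
  deq : ∀ z ∈ D, j z ≠ 0 → j z ≠ 1728 → j' z ≠ 0 →
    j''' z / j' z - (3/2) * (j'' z / j' z)^2
      + ((j z)^2 - 1968 * j z + 2654208) / (2 * (j z)^2 * (j z - 1728)^2) * (j' z)^2 = 0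
  mod_iff : ∀ z₁ ∈ D, ∀ z₂ ∈ D, ∀ N : ℕ, 0 < N →
    (MvPolynomial.aeval ![j z₁, j z₂] (Φ N) = 0 ↔
      ∃ g : GL2Q, DetRed g (N : ℤ) ∧ MoebRel g z₂ z₁)
  sing : ∀ z ∈ D, (j z = 0 ∨ j z = 1728 ∨ j' z = 0) →
    ∃ g : GL2Q, ¬ IsScalarMat g ∧ MoebRel g z z

namespace JField

variable (F : JField K)

/-- A point of the domain is special if `Φ_N(j(z), j(z)) = 0` for some `N > 1`. -/
def Special (z : K) : Prop :=
  ∃ N : ℕ, 1 < N ∧ MvPolynomial.aeval ![F.j z, F.j z] (F.Φ N) = 0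

/-- `J(S) = j(S) ∪ j'(S) ∪ j''(S)`. -/
def JImage (S : Set K) : Set K := F.j '' S ∪ F.j' '' S ∪ F.j'' '' S

/-- A `j`-derivation: a derivation `der` with `der(j⁽ᵗ⁾(z)) = j⁽ᵗ⁺¹⁾(z)·derz` for `z ∈ D`. -/
def IsJDer (der : Derivation ℚ K K) : Prop :=
  ∀ z ∈ F.D, der (F.j z) = F.j' z * der z ∧ der (F.j' z) = F.j'' z * der z ∧
    der (F.j'' z) = F.j''' z * der z

/-- The `j`-closure of `X`: the intersection of the kernels of all `j`-derivations
vanishing on `X`. -/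
def jcl (X : Set K) : Set K :=
  {a | ∀ der : Derivation ℚ K K, F.IsJDer der → (∀ x ∈ X, der x = 0) → der a = 0}

/-- The `j`-closure of a set, as a subfield. -/
def jclSubfield (X : Set K) : Subfield K where
  carrier := F.jcl X
  zero_mem' := fun der _ _ => by simp
  one_mem' := fun der _ _ => by simp
  add_mem' := fun ha hb der hj hX => by
    rw [map_add, ha der hj hX, hb der hj hX, add_zero]
  mul_mem' := fun {a b} ha hb der hj hX => by
    rw [Derivation.leibniz, ha der hj hX, hb der hj hX]; simp
  neg_mem' := fun {a} ha der hj hX => by rw [map_neg, ha der hj hX, neg_zero]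
  inv_mem' := fun a ha der hj hX => by
    rw [Derivation.leibniz_inv, ha der hj hX]; simp

end JField

/-- The transcendence degree of the field generated by `A` over the subfield `Fb`:
the least size of a finite subset `S ⊆ A` such that every element of `A` is algebraic
over `Fb(S)` (`⊤` if there is no such set). -/
def trdegNat (Fb : Subfield K) (A : Set K) : ℕ∞ :=
  sInf {n : ℕ∞ | ∃ S : Finset K, ↑S ⊆ A ∧ (S.card : ℕ∞) = n ∧
    ∀ a ∈ A, IsAlgebraic (Subfield.closure ((Fb : Set K) ∪ ↑S)) a}

/-- The dimension of `A` over `B` in the pregeometry `Gcl`: the least size of a finite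
subset `S ⊆ A` with `A ⊆ Gcl(S ∪ B)`. -/
def Gdim (A B : Set K) : ℕ∞ :=
  sInf {n : ℕ∞ | ∃ S : Finset K, ↑S ⊆ A ∧ (S.card : ℕ∞) = n ∧ A ⊆ Gcl (↑S ∪ B)}

namespace JField

variable (F : JField K)

/-- The dimension of `A` over `B` in the pregeometry `jcl`. -/
def jdim (A B : Set K) : ℕ∞ :=
  sInf {n : ℕ∞ | ∃ S : Finset K, ↑S ⊆ A ∧ (S.card : ℕ∞) = n ∧ A ⊆ F.jcl (↑S ∪ B)}

end JField

/-- A `j`-subfield of a `j`-field `(K, D)`: a subfield `A` together with a subset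
`D_A ⊆ D ∩ A` closed under the `GL₂(ℚ)`-action, such that `A` is closed under
`j, j', j'', j'''` on `D_A`. -/
structure JSubfield (F : JField K) where
  carrier : Subfield K
  dom : Set K
  dom_subset : dom ⊆ F.D
  dom_mem : ∀ z ∈ dom, z ∈ carrier
  dom_closed : ∀ z ∈ dom, ∀ g : GL2Q, moeb g z ∈ dom
  jmem : ∀ z ∈ dom, F.j z ∈ carrier ∧ F.j' z ∈ carrier ∧ F.j'' z ∈ carrier ∧
    F.j''' z ∈ carrier

namespace JSubfield

variable {F : JField K}

/-- Inclusion of `j`-subfields. -/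
def le (A B : JSubfield F) : Prop := A.carrier ≤ B.carrier ∧ A.dom ⊆ B.dom

/-- Union (compositum) of two `j`-subfields. -/
def union (A B : JSubfield F) : JSubfield F where
  carrier := A.carrier ⊔ B.carrier
  dom := A.dom ∪ B.dom
  dom_subset := Set.union_subset A.dom_subset B.dom_subset
  dom_mem := by
    rintro z (hz | hz)
    · exact SetLike.le_def.mp le_sup_left (A.dom_mem z hz)
    · exact SetLike.le_def.mp le_sup_right (B.dom_mem z hz)
  dom_closed := by
    rintro z (hz | hz) g
    · exact Or.inl (A.dom_closed z hz g)
    · exact Or.inr (B.dom_closed z hz g)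
  jmem := by
    rintro z (hz | hz)
    · obtain ⟨h1, h2, h3, h4⟩ := A.jmem z hz
      exact ⟨SetLike.le_def.mp le_sup_left h1, SetLike.le_def.mp le_sup_left h2,
        SetLike.le_def.mp le_sup_left h3, SetLike.le_def.mp le_sup_left h4⟩
    · obtain ⟨h1, h2, h3, h4⟩ := B.jmem z hz
      exact ⟨SetLike.le_def.mp le_sup_right h1, SetLike.le_def.mp le_sup_right h2,
        SetLike.le_def.mp le_sup_right h3, SetLike.le_def.mp le_sup_right h4⟩

/-- Intersection of two `j`-subfields. -/
def inter (A B : JSubfield F) : JSubfield F where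
  carrier := A.carrier ⊓ B.carrier
  dom := A.dom ∩ B.dom
  dom_subset := fun z hz => A.dom_subset hz.1
  dom_mem := fun z hz => ⟨A.dom_mem z hz.1, B.dom_mem z hz.2⟩
  dom_closed := fun z hz g => ⟨A.dom_closed z hz.1 g, B.dom_closed z hz.2 g⟩
  jmem := fun z hz => by
    obtain ⟨a1, a2, a3, a4⟩ := A.jmem z hz.1
    obtain ⟨b1, b2, b3, b4⟩ := B.jmem z hz.2
    exact ⟨⟨a1, b1⟩, ⟨a2, b2⟩, ⟨a3, b3⟩, ⟨a4, b4⟩⟩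

end JSubfield

namespace JField

variable (F : JField K)

/-- `A` is a `j`-subfield finitely generated over `Cs`: `A` is the smallest
`j`-subfield containing `Cs` and some finite set `X`. -/
def FinGenOver (Cs A : JSubfield F) : Prop :=
  Cs.le A ∧ ∃ X : Finset K, ↑X ⊆ (A.carrier : Set K) ∧ (↑X ∩ F.D ⊆ A.dom) ∧
    ∀ B : JSubfield F, Cs.le B → ↑X ⊆ (B.carrier : Set K) → (↑X ∩ F.D ⊆ B.dom) → A.le B

/-- The predimension `δ_j(A | Cs) = tr.deg._Cs A − 3·dim_G(D_A | D_Cs)`. -/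
def delta (Cs A : JSubfield F) : ℤ :=
  ((trdegNat Cs.carrier (A.carrier : Set K)).toNat : ℤ)
    - 3 * ((Gdim A.dom Cs.dom).toNat : ℤ)

/-- The predimension of a finite tuple `z` over a `j`-subfield `A`:
`tr.deg._A A(z, J(z)) − 3·dim_G(z | D_A)`. -/
def deltaTuple (A : JSubfield F) (z : Finset K) : ℤ :=
  ((trdegNat A.carrier ((↑z : Set K) ∪ F.JImage ↑z)).toNat : ℤ)
    - 3 * ((Gdim (↑z : Set K) A.dom).toNat : ℤ)

/-- Self-sufficiency of an extension of `j`-subfields: `A ⊴ B` iff `A ≤ B` and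
`δ_j(z | A) ≥ 0` for all finite tuples `z` from `D_B`. -/
def SelfSuff (A B : JSubfield F) : Prop :=
  A.le B ∧ ∀ z : Finset K, (↑z : Set K) ⊆ B.dom → 0 ≤ F.deltaTuple A z

/-- Self-sufficiency of a `j`-subfield in the ambient `j`-field `(K, D)`. -/
def SelfSuffAmb (A : JSubfield F) : Prop :=
  ∀ z : Finset K, (↑z : Set K) ⊆ F.D → 0 ≤ F.deltaTuple A z

/-- The ambient `j`-field is graph-generated by `J`. -/
def GraphGenAmb : Prop := Subfield.closure (F.D ∪ F.JImage F.D) = ⊤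

/-- A `j`-subfield is graph-generated by `J`. -/
def GraphGen (A : JSubfield F) : Prop :=
  A.carrier = Subfield.closure (A.dom ∪ F.JImage A.dom)

/-- Evaluation map for `j`-polynomials: the variable `(i, 0)` is sent to `aᵢ`, and
`(i, 1), (i, 2), (i, 3)` to `j(aᵢ), j'(aᵢ), j''(aᵢ)`. -/
def jVal {n : ℕ} (a : Fin n → K) : Fin n × Fin 4 → K :=
  fun p => ![a p.1, F.j (a p.1), F.j' (a p.1), F.j'' (a p.1)] p.2

/-- The formal partial derivative `derf/derXᵢ` of a `j`-polynomial, evaluated at `a`,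
where `j, j', j''` are differentiated by the chain rule. -/
def jpderivEval {n : ℕ} (i : Fin n) (f : MvPolynomial (Fin n × Fin 4) K)
    (a : Fin n → K) : K :=
  MvPolynomial.eval (F.jVal a) (MvPolynomial.pderiv (i, (0 : Fin 4)) f)
  + F.j' (a i) * MvPolynomial.eval (F.jVal a) (MvPolynomial.pderiv (i, (1 : Fin 4)) f)
  + F.j'' (a i) * MvPolynomial.eval (F.jVal a) (MvPolynomial.pderiv (i, (2 : Fin 4)) f)
  + F.j''' (a i) * MvPolynomial.eval (F.jVal a) (MvPolynomial.pderiv (i, (3 : Fin 4)) f)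

/-- `a` is a solution of the Khovanskii system of `j`-polynomials `f` over `B`:
the `fᵢ` have coefficients in the subring generated by `B`, vanish at `a`, and the
Jacobian determinant of formal `j`-polynomial partial derivatives does not vanish at `a`. -/
def IsKhovanskiiSol (B : Set K) {n : ℕ}
    (f : Fin n → MvPolynomial (Fin n × Fin 4) K) (a : Fin n → K) : Prop :=
  (∀ i m, (f i).coeff m ∈ Subring.closure B) ∧
  (∀ i, MvPolynomial.eval (F.jVal a) (f i) = 0) ∧
  (Matrix.of fun i k => F.jpderivEval k (f i) a).det ≠ 0

/-- The Khovanskii closure `kcl(B)`: elements which are the first coordinate of a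
non-singular solution of a Khovanskii system of `j`-polynomials over `B`. -/
def kcl (B : Set K) : Set K :=
  {a | ∃ (n : ℕ) (f : Fin (n+1) → MvPolynomial (Fin (n+1) × Fin 4) K)
    (x : Fin (n+1) → K), x 0 = a ∧ F.IsKhovanskiiSol B f x}

end JField

/-- `z` is a `Gcl`-basis of `Ddom` over `B`: the coordinates of `z` lie in `Ddom`,
span `Ddom` over `B`, and are `Gcl`-independent over `B`. -/
def IsGclBasis {n : ℕ} (z : Fin n → K) (Ddom B : Set K) : Prop :=
  (∀ i, z i ∈ Ddom) ∧ Ddom ⊆ Gcl (Set.range z ∪ B) ∧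
  ∀ i, z i ∉ Gcl ((Set.range z \ {z i}) ∪ B)


namespace JField

variable (F : JField K)

/-- The predimension of a finite set `X` over `(C, D_C)` with `C = jcl(∅)`:
`δ_j(X) = tr.deg._C C(X, J(dom)) − 3·dim_G(X ∩ D | D_C)`, where `dom = Gcl((X ∩ D) ∪ D_C)`
is the domain of the `j`-subfield generated by `X` over `(C, D_C)`. -/
def deltaFinset (X : Finset K) : ℤ :=
  ((trdegNat (F.jclSubfield ∅)
      ((↑X : Set K) ∪ F.JImage (Gcl (((↑X : Set K) ∩ F.D) ∪ (F.jcl ∅ ∩ F.D))))).toNat : ℤ)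
    - 3 * ((Gdim ((↑X : Set K) ∩ F.D) (F.jcl ∅ ∩ F.D)).toNat : ℤ)

end JField

end

/- ### Auxiliary machinery for Khovanskii closures -/
noncomputable section
open scoped Classical

namespace KclAux
open MvPolynomial

variable {K : Type*} [CommRing K]

lemma closure_fin {B : Set K} {c : K} (hc : c ∈ Subring.closure B) :
    ∃ S : Finset K, ↑S ⊆ B ∧ c ∈ Subring.closure (↑S : Set K) := by
  induction hc using Subring.closure_induction with
  | mem x hx => exact ⟨{x}, by simpa using hx, Subring.subset_closure (by simp)⟩
  | zero => exact ⟨∅, by simp, zero_mem _⟩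
  | one => exact ⟨∅, by simp, one_mem _⟩
  | add x y hx hy ihx ihy =>
      obtain ⟨S, hS, hxS⟩ := ihx; obtain ⟨T, hT, hyT⟩ := ihy
      refine ⟨S ∪ T, ?_, add_mem
        (Subring.closure_mono (by simp) hxS) (Subring.closure_mono (by simp) hyT)⟩
      · rw [Finset.coe_union]; exact Set.union_subset hS hT
  | neg x hx ihx =>
      obtain ⟨S, hS, hxS⟩ := ihx; exact ⟨S, hS, neg_mem hxS⟩
  | mul x y hx hy ihx ihy =>
      obtain ⟨S, hS, hxS⟩ := ihx; obtain ⟨T, hT, hyT⟩ := ihy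
      refine ⟨S ∪ T, ?_, mul_mem
        (Subring.closure_mono (by simp) hxS) (Subring.closure_mono (by simp) hyT)⟩
      · rw [Finset.coe_union]; exact Set.union_subset hS hT

lemma coeffs_fin {N : ℕ} {V : Type*} {B : Set K} (f : Fin N → MvPolynomial V K)
    (h : ∀ i m, (f i).coeff m ∈ Subring.closure B) :
    ∃ S : Finset K, ↑S ⊆ B ∧ ∀ i m, (f i).coeff m ∈ Subring.closure (↑S : Set K) := by
  choose S hSB hmem using fun p : Fin N × (V →₀ ℕ) => closure_fin (h p.1 p.2)
  refine ⟨Finset.univ.biUnion fun i => (f i).support.biUnion fun m => S (i, m), ?_, ?_⟩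
  · intro x hx
    obtain ⟨i, -, hx⟩ := Finset.mem_biUnion.mp (Finset.mem_coe.mp hx)
    obtain ⟨m, -, hx⟩ := Finset.mem_biUnion.mp hx
    exact hSB (i, m) hx
  · intro i m
    by_cases hm : m ∈ (f i).support
    · refine Subring.closure_mono ?_ (hmem (i, m))
      intro x hx
      refine Finset.mem_coe.mpr (Finset.mem_biUnion.mpr ⟨i, Finset.mem_univ i,
        Finset.mem_biUnion.mpr ⟨m, hm, hx⟩⟩)
    · rw [notMem_support_iff.mp hm]; exact zero_mem _

lemma exists_int_poly {V : Type*} {M : ℕ} (t : Fin M → K) (p : MvPolynomial V K)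
    (hp : ∀ m, p.coeff m ∈ Subring.closure (Set.range t)) :
    ∃ G : MvPolynomial (V ⊕ Fin M) ℤ,
      aeval (Sum.elim X fun k => C (t k)) G = p := by
  let φ : MvPolynomial (V ⊕ Fin M) ℤ →ₐ[ℤ] MvPolynomial V K :=
    aeval (Sum.elim X fun k => C (t k))
  suffices h : p ∈ φ.range by obtain ⟨G, hG⟩ := h; exact ⟨G, hG⟩
  have hC : ∀ c ∈ Subring.closure (Set.range t), (C c : MvPolynomial V K) ∈ φ.range := by
    intro c hc
    have hle : Subring.closure (Set.range t) ≤
        (φ.range.toSubring).comap (C : K →+* MvPolynomial V K) := by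
      rw [Subring.closure_le]
      rintro _ ⟨k, rfl⟩
      show (C (t k) : MvPolynomial V K) ∈ φ.range
      exact (AlgHom.mem_range φ).mpr ⟨X (Sum.inr k), by simp [φ]⟩
    exact hle hc
  rw [p.as_sum]
  refine Subalgebra.sum_mem _ fun m _ => ?_
  rw [monomial_eq]
  refine mul_mem (hC _ (hp m)) ?_
  refine Subalgebra.prod_mem _ fun v _ => pow_mem ((AlgHom.mem_range φ).mpr ⟨X (Sum.inl v), by simp [φ]⟩) _

lemma pderiv_aeval_elim {V W : Type*} (c : W → K) (v0 : V) (G : MvPolynomial (V ⊕ W) K) :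
    pderiv v0 (aeval (R := K) (Sum.elim X fun w => C (c w)) G)
      = aeval (Sum.elim X fun w => C (c w)) (pderiv (Sum.inl v0) G) := by
  induction G using MvPolynomial.induction_on with
  | C a => simp
  | add p q hp hq => simp only [map_add, hp, hq]
  | mul_X p u hp =>
      have key : pderiv v0 (aeval (Sum.elim X fun w => C (c w)) (X u : MvPolynomial (V ⊕ W) K))
          = aeval (Sum.elim X fun w => C (c w)) (pderiv (Sum.inl v0) (X u : MvPolynomial (V ⊕ W) K)) := by
        cases u with
        | inl v =>
            by_cases h : v0 = v <;>
              simp [h, pderiv_X, Pi.single_apply]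
        | inr w =>
            simp [pderiv_X_of_ne (show (Sum.inr w : V ⊕ W) ≠ Sum.inl v0 by simp)]
      rw [map_mul, pderiv_mul, hp, key, pderiv_mul, map_add, map_mul, map_mul]

lemma eval_aeval_elim {V W : Type*} (b : V → K) (c : W → K) (G : MvPolynomial (V ⊕ W) K) :
    eval b (aeval (Sum.elim X fun w => C (c w)) G) = eval (Sum.elim b c) G := by
  have h : (eval b).comp
      ((aeval (Sum.elim X fun w => C (c w)) :
        MvPolynomial (V ⊕ W) K →ₐ[K] MvPolynomial V K) : MvPolynomial (V ⊕ W) K →+* MvPolynomial V K)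
      = eval (Sum.elim b c) := by
    apply MvPolynomial.ringHom_ext
    · intro a; simp
    · intro v; cases v <;> simp
  exact RingHom.congr_fun h G

lemma coeff_rename_mem {R : Subring K} {σ τ : Type*} {g : σ → τ} (hg : Function.Injective g)
    {p : MvPolynomial σ K} (hp : ∀ m, p.coeff m ∈ R) (d) : (rename g p).coeff d ∈ R := by
  by_cases h : (rename g p).coeff d = 0
  · rw [h]; exact zero_mem _
  · obtain ⟨m, hm, -⟩ := coeff_rename_ne_zero g p d h
    rw [← hm, coeff_rename_mapDomain g hg]
    exact hp m

end KclAux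

namespace KclAux
open MvPolynomial

variable {K : Type*} [Field K] [CharZero K] (F : JField K)

/-- Generalization of `JField.jVal` to an arbitrary index type. -/
def jValG {ι : Type*} (a : ι → K) : ι × Fin 4 → K :=
  fun p => ![a p.1, F.j (a p.1), F.j' (a p.1), F.j'' (a p.1)] p.2

/-- Generalization of `JField.jpderivEval` to an arbitrary index type. -/
def jpdG {ι : Type*} (i : ι) (f : MvPolynomial (ι × Fin 4) K) (a : ι → K) : K :=
  MvPolynomial.eval (jValG F a) (MvPolynomial.pderiv (i, (0 : Fin 4)) f)
  + F.j' (a i) * MvPolynomial.eval (jValG F a) (MvPolynomial.pderiv (i, (1 : Fin 4)) f)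
  + F.j'' (a i) * MvPolynomial.eval (jValG F a) (MvPolynomial.pderiv (i, (2 : Fin 4)) f)
  + F.j''' (a i) * MvPolynomial.eval (jValG F a) (MvPolynomial.pderiv (i, (3 : Fin 4)) f)

lemma jVal_eq {n : ℕ} (a : Fin n → K) : F.jVal a = jValG F a := rfl

lemma jpderivEval_eq {n : ℕ} (i : Fin n) (f : MvPolynomial (Fin n × Fin 4) K) (a : Fin n → K) :
    F.jpderivEval i f a = jpdG F i f a := rfl

/-- Variable-renaming map induced by `u` on the index set. -/
def ρmap {ι κ : Type*} (u : ι → κ) : ι × Fin 4 → κ × Fin 4 := fun v => (u v.1, v.2)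

lemma ρmap_inj {ι κ : Type*} {u : ι → κ} (hu : Function.Injective u) :
    Function.Injective (ρmap u) := by
  rintro ⟨i, r⟩ ⟨i', r'⟩ h
  simp only [ρmap, Prod.mk.injEq] at h
  exact Prod.ext (hu h.1) h.2

variable {ι κ : Type*} {u : ι → κ} {a : ι → K} {b : κ → K}

lemma jValG_comp (hba : ∀ i, b (u i) = a i) : jValG F b ∘ ρmap u = jValG F a := by
  funext v
  simp only [jValG, ρmap, Function.comp_apply, hba v.1]

lemma eval_rename_ρ (hba : ∀ i, b (u i) = a i) (p : MvPolynomial (ι × Fin 4) K) :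
    eval (jValG F b) (rename (ρmap u) p) = eval (jValG F a) p := by
  rw [eval_rename, jValG_comp F hba]

lemma jpdG_rename (hu : Function.Injective u) (hba : ∀ i, b (u i) = a i) (i : ι)
    (p : MvPolynomial (ι × Fin 4) K) :
    jpdG F (u i) (rename (ρmap u) p) b = jpdG F i p a := by
  have h4 : ∀ r : Fin 4, eval (jValG F b) (pderiv (u i, r) (rename (ρmap u) p))
      = eval (jValG F a) (pderiv (i, r) p) := by
    intro r
    have h : ((u i, r) : κ × Fin 4) = ρmap u (i, r) := rfl
    rw [h, pderiv_rename (ρmap_inj hu), eval_rename_ρ F hba]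
  unfold jpdG
  rw [h4 0, h4 1, h4 2, h4 3, hba i]

lemma jpdG_rename_zero {w : κ} (hwr : w ∉ Set.range u) (p : MvPolynomial (ι × Fin 4) K) :
    jpdG F w (rename (ρmap u) p) b = 0 := by
  have h4 : ∀ r : Fin 4, pderiv (w, r) (rename (ρmap u) p) = 0 := by
    intro r
    apply pderiv_eq_zero_of_notMem_vars
    intro hmem
    obtain ⟨⟨i, r'⟩, -, hv⟩ := Finset.mem_image.mp (vars_rename (ρmap u) p hmem)
    exact hwr ⟨i, congrArg Prod.fst hv⟩
  simp [jpdG, h4]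

end KclAux

namespace KclAux
open MvPolynomial

variable {K : Type*} [Field K] [CharZero K] (F : JField K)

lemma mem_kcl_self {A : Set K} {a : K} (ha : a ∈ A) : a ∈ F.kcl A := by
  classical
  refine ⟨0, fun _ => X ((0 : Fin 1), (0 : Fin 4)) - C a, fun _ => a, rfl, ?_, ?_, ?_⟩
  · intro i m
    rw [coeff_sub]
    refine sub_mem ?_ ?_
    · rw [coeff_X']
      split_ifs
      · exact one_mem _
      · exact zero_mem _
    · rw [coeff_C]
      split_ifs
      · exact Subring.subset_closure ha
      · exact zero_mem _
  · intro i
    simp [JField.jVal]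
  · rw [Matrix.det_fin_one]
    show F.jpderivEval 0 (X ((0 : Fin 1), (0 : Fin 4)) - C a) (fun _ => a) ≠ 0
    unfold JField.jpderivEval
    have h1 : pderiv ((0 : Fin 1), (1 : Fin 4))
        (X ((0 : Fin 1), (0 : Fin 4)) : MvPolynomial (Fin 1 × Fin 4) K) = 0 :=
      pderiv_X_of_ne (by decide)
    have h2 : pderiv ((0 : Fin 1), (2 : Fin 4))
        (X ((0 : Fin 1), (0 : Fin 4)) : MvPolynomial (Fin 1 × Fin 4) K) = 0 :=
      pderiv_X_of_ne (by decide)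
    have h3 : pderiv ((0 : Fin 1), (3 : Fin 4))
        (X ((0 : Fin 1), (0 : Fin 4)) : MvPolynomial (Fin 1 × Fin 4) K) = 0 :=
      pderiv_X_of_ne (by decide)
    simp [h1, h2, h3, pderiv_X_self]

lemma kcl_mono {A B : Set K} (hAB : A ⊆ B) : F.kcl A ⊆ F.kcl B := by
  rintro a ⟨n, f, x, hx0, hcf, hev, hdet⟩
  exact ⟨n, f, x, hx0, fun i m => Subring.closure_mono hAB (hcf i m), hev, hdet⟩

lemma kcl_finchar {A : Set K} {a : K} (ha : a ∈ F.kcl A) :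
    ∃ S : Finset K, ↑S ⊆ A ∧ a ∈ F.kcl (↑S : Set K) := by
  obtain ⟨n, f, x, hx0, hcf, hev, hdet⟩ := ha
  obtain ⟨S, hSA, hcfS⟩ := coeffs_fin f hcf
  exact ⟨S, hSA, n, f, x, hx0, hcfS, hev, hdet⟩

end KclAux

namespace KclAux
open MvPolynomial

variable {K : Type*} [Field K] [CharZero K] (F : JField K)

lemma kcl_idem {A : Set K} : F.kcl (F.kcl A) ⊆ F.kcl A := by
  classical
  rintro a ⟨n, f, x, hx0, hcf, hev, hdet⟩
  -- Step 1: coefficients lie in the subring generated by finitely many elements of `kcl A`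
  obtain ⟨S, hSA, hcfS⟩ := coeffs_fin f hcf
  set t : Fin S.card → K := fun k => ((S.equivFin.symm k : K)) with ht
  have hranget : Set.range t = (S : Set K) := by
    ext v
    constructor
    · rintro ⟨k, rfl⟩; exact (S.equivFin.symm k).2
    · intro hv; exact ⟨S.equivFin ⟨v, hv⟩, by simp [ht]⟩
  have htk : ∀ k, t k ∈ F.kcl A := fun k => hSA (S.equivFin.symm k).2
  -- Step 2: integral polynomial representations of the `f i`
  have hrep : ∀ i, ∃ G : MvPolynomial ((Fin (n+1) × Fin 4) ⊕ Fin S.card) ℤ,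
      aeval (Sum.elim X fun k => C (t k)) G = f i := fun i =>
    exists_int_poly t (f i) fun m => hranget ▸ hcfS i m
  choose G hG using hrep
  set Q : Fin (n+1) → MvPolynomial ((Fin (n+1) × Fin 4) ⊕ Fin S.card) K :=
    fun i => map (Int.castRingHom K) (G i) with hQdef
  have hQ : ∀ i, aeval (Sum.elim X fun k => C (t k)) (Q i) = f i := by
    intro i
    rw [hQdef]
    rw [show (Int.castRingHom K) = algebraMap ℤ K from rfl, aeval_map_algebraMap]
    exact hG i
  -- Step 3: Khovanskii systems over `A` for the `t k`
  choose nn g y hy0 hsol using htk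
  have hgcf := fun k => (hsol k).1
  have hgev := fun k => (hsol k).2.1
  have hgdet := fun k => (hsol k).2.2
  -- Step 4: the combined system, indexed by `ι`
  set ι := (Fin (n+1)) ⊕ (Σ k : Fin S.card, Fin (nn k + 1)) with hι
  set z : ι → K := Sum.elim x (fun p => y p.1 p.2) with hz
  set σm : ((Fin (n+1) × Fin 4) ⊕ Fin S.card) → ι × Fin 4 :=
    Sum.elim (fun v => (Sum.inl v.1, v.2)) (fun k => (Sum.inr ⟨k, 0⟩, (0 : Fin 4))) with hσm
  have hσinj : Function.Injective σm := by
    rintro (⟨i, r⟩ | k) (⟨i', r'⟩ | k') h <;>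
      simp only [hσm, Sum.elim_inl, Sum.elim_inr, Prod.mk.injEq] at h
    · injection h.1 with h1
      rw [h1, h.2]
    · exact absurd h.1 (by simp)
    · exact absurd h.1 (by simp)
    · injection h.1 with h1
      have h2 : k = k' := congrArg Sigma.fst h1
      rw [h2]
  have emk : ∀ (k : Fin S.card) (j : Fin (nn k + 1)), (Sum.inr ⟨k, j⟩ : ι) ∈ Set.range
      (fun j' : Fin (nn k + 1) => (Sum.inr ⟨k, j'⟩ : ι)) := fun k j => ⟨j, rfl⟩
  have huinj : ∀ k : Fin S.card, Function.Injective
      (fun j' : Fin (nn k + 1) => (Sum.inr ⟨k, j'⟩ : ι)) := by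
    intro k j j' h
    simpa [Sigma.mk.inj_iff] using h
  have hbak : ∀ k : Fin S.card, ∀ j' : Fin (nn k + 1),
      z (Sum.inr ⟨k, j'⟩) = y k j' := fun k j' => rfl
  set FF : ι → MvPolynomial (ι × Fin 4) K :=
    Sum.elim (fun i => rename σm (Q i))
      (fun p => rename (ρmap (fun j => (Sum.inr ⟨p.1, j⟩ : ι))) (g p.1 p.2)) with hFF
  have hθ : jValG F z ∘ σm = Sum.elim (F.jVal x) t := by
    funext v
    cases v with
    | inl v => rfl
    | inr k =>
        show jValG F z (Sum.inr ⟨k, 0⟩, (0 : Fin 4)) = t k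
        show z (Sum.inr ⟨k, 0⟩) = t k
        rw [hbak k 0, hy0 k]
  -- coefficients of the combined system
  have hFFcf : ∀ (u : ι) (d), (FF u).coeff d ∈ Subring.closure A := by
    rintro (i | ⟨k, j⟩) d
    · show (rename σm (Q i)).coeff d ∈ _
      refine coeff_rename_mem hσinj (fun m => ?_) d
      rw [hQdef, coeff_map]
      exact intCast_mem _ _
    · show (rename (ρmap fun j' => (Sum.inr ⟨k, j'⟩ : ι)) (g k j)).coeff d ∈ _
      exact coeff_rename_mem (ρmap_inj (huinj k)) (hgcf k j) d
  -- evaluations of the combined system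
  have hFFev : ∀ u : ι, eval (jValG F z) (FF u) = 0 := by
    rintro (i | ⟨k, j⟩)
    · show eval (jValG F z) (rename σm (Q i)) = 0
      rw [eval_rename, hθ, ← eval_aeval_elim (F.jVal x) t, hQ i]
      exact hev i
    · show eval (jValG F z) (rename (ρmap fun j' => (Sum.inr ⟨k, j'⟩ : ι)) (g k j)) = 0
      rw [eval_rename_ρ F (hbak k)]
      exact hgev k j
  -- the combined Jacobian matrix
  set Mb : Matrix ι ι K := Matrix.of fun uu vv => jpdG F vv (FF uu) z with hMb
  have hMb11 : ∀ i i', Mb (Sum.inl i) (Sum.inl i') = F.jpderivEval i' (f i) x := by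
    intro i i'
    have h4 : ∀ r : Fin 4, eval (jValG F z) (pderiv ((Sum.inl i' : ι), r) (rename σm (Q i)))
        = eval (F.jVal x) (pderiv (i', r) (f i)) := by
      intro r
      have e1 : ((Sum.inl i' : ι), r) = σm (Sum.inl (i', r)) := rfl
      rw [e1, pderiv_rename hσinj, eval_rename, hθ,
        ← eval_aeval_elim (F.jVal x) t, ← pderiv_aeval_elim, hQ i]
    show jpdG F (Sum.inl i') (rename σm (Q i)) z = _
    rw [jpderivEval_eq]
    unfold jpdG
    rw [h4 0, h4 1, h4 2, h4 3]
    rfl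
  have hMb22 : ∀ (k : Fin S.card) (j j'), Mb (Sum.inr ⟨k, j⟩) (Sum.inr ⟨k, j'⟩)
      = F.jpderivEval j' (g k j) (y k) := by
    intro k j j'
    show jpdG F ((fun j'' => (Sum.inr ⟨k, j''⟩ : ι)) j')
      (rename (ρmap fun j'' => (Sum.inr ⟨k, j''⟩ : ι)) (g k j)) z = _
    rw [jpdG_rename F (huinj k) (hbak k), jpderivEval_eq]
  have hMb21 : ∀ (p : Σ k : Fin S.card, Fin (nn k + 1)) (w : ι),
      w ∉ Set.range (fun j' : Fin (nn p.1 + 1) => (Sum.inr ⟨p.1, j'⟩ : ι)) →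
      Mb (Sum.inr p) w = 0 := by
    rintro ⟨k, j⟩ w hw
    exact jpdG_rename_zero F hw (g k j)
  -- the determinant of the combined Jacobian is nonzero
  have hMbdet : Mb.det ≠ 0 := by
    have h21 : Mb.toBlocks₂₁ = 0 := by
      ext p i
      exact hMb21 p (Sum.inl i) (by rintro ⟨j', h⟩; exact Sum.inr_ne_inl h)
    rw [← Matrix.fromBlocks_toBlocks Mb, h21, Matrix.det_fromBlocks_zero₂₁]
    have h11 : Mb.toBlocks₁₁.det ≠ 0 := by
      have : Mb.toBlocks₁₁ = Matrix.of fun i k => F.jpderivEval k (f i) x := by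
        ext i i'
        exact hMb11 i i'
      rw [this]
      exact hdet
    have h22 : Mb.toBlocks₂₂.det ≠ 0 := by
      have hbt : Matrix.BlockTriangular Mb.toBlocks₂₂ Sigma.fst := by
        intro p q hpq
        refine hMb21 p (Sum.inr q) ?_
        rintro ⟨j', h⟩
        rw [Sum.inr.injEq] at h
        exact absurd (congrArg Sigma.fst h.symm) (ne_of_lt hpq)
      rw [hbt.det_fintype]
      refine Finset.prod_ne_zero_iff.mpr fun k _ => ?_
      let ek : Fin (nn k + 1) ≃ {p : Σ k' : Fin S.card, Fin (nn k' + 1) // p.1 = k} :=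
        { toFun := fun j => ⟨⟨k, j⟩, rfl⟩
          invFun := fun p => p.2 ▸ p.1.2
          left_inv := fun j => rfl
          right_inv := fun p => by
            rcases p with ⟨⟨k1, j⟩, h⟩
            subst h
            rfl }
      have hsub : ((Mb.toBlocks₂₂.toSquareBlock Sigma.fst k).submatrix ek ek)
          = Matrix.of fun j j' => F.jpderivEval j' (g k j) (y k) := by
        ext j j'
        exact hMb22 k j j'
      have hdet2 : (Mb.toBlocks₂₂.toSquareBlock Sigma.fst k).det
          = (Matrix.of fun j j' => F.jpderivEval j' (g k j) (y k)).det := by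
        rw [← hsub, Matrix.det_submatrix_equiv_self]
      rw [hdet2]
      exact hgdet k
    exact mul_ne_zero h11 h22
  -- Step 5: transport along an equivalence `Fin (N+1) ≃ ι`
  have hne : Nonempty ι := ⟨Sum.inl 0⟩
  obtain ⟨N, hN⟩ := Nat.exists_eq_succ_of_ne_zero (Fintype.card_ne_zero (α := ι))
  let e1 : Fin (N + 1) ≃ ι := (finCongr hN.symm).trans (Fintype.equivFin ι).symm
  let e : Fin (N + 1) ≃ ι := (Equiv.swap (0 : Fin (N + 1)) (e1.symm (Sum.inl 0))).trans e1
  have he0 : e 0 = Sum.inl 0 := by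
    show e1 (Equiv.swap (0 : Fin (N + 1)) (e1.symm (Sum.inl 0)) 0) = Sum.inl 0
    rw [Equiv.swap_apply_left]
    exact e1.apply_symm_apply _
  have hba : ∀ w : ι, (z ∘ e) (e.symm w) = z w := fun w => by
    simp only [Function.comp_apply, Equiv.apply_symm_apply]
  refine ⟨N, fun i => rename (ρmap e.symm) (FF (e i)), z ∘ e, ?_, ?_, ?_, ?_⟩
  · show z (e 0) = a
    rw [he0]
    exact hx0
  · intro i m
    exact coeff_rename_mem (ρmap_inj e.symm.injective) (hFFcf (e i)) m
  · intro i
    rw [jVal_eq, eval_rename_ρ F hba]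
    exact hFFev (e i)
  · have hm : (Matrix.of fun i k => F.jpderivEval k
        ((fun i' => rename (ρmap e.symm) (FF (e i'))) i) (z ∘ e)) = Mb.submatrix e e := by
      ext i k
      show F.jpderivEval k (rename (ρmap e.symm) (FF (e i))) (z ∘ e) = jpdG F (e k) (FF (e i)) z
      rw [jpderivEval_eq]
      have := jpdG_rename F (u := e.symm) e.symm.injective hba (e k) (FF (e i))
      simpa using this
    rw [hm, Matrix.det_submatrix_equiv_self]
    exact hMbdet

end KclAux

end

/-- The Khovanskii closure operator `kcl` of a `j`-field satisfies:
reflexivity, monotonicity, idempotence, and finite character. -/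
theorem kcl_closure_properties {K : Type*} [Field K] [CharZero K] (F : JField K) :
    (∀ A : Set K, A ⊆ F.kcl A) ∧
    (∀ A B : Set K, A ⊆ B → F.kcl A ⊆ F.kcl B) ∧
    (∀ A : Set K, F.kcl (F.kcl A) = F.kcl A) ∧
    (∀ (A : Set K) (a : K), a ∈ F.kcl A →
      ∃ S : Finset K, ↑S ⊆ A ∧ a ∈ F.kcl (↑S : Set K)) := by
  refine ⟨fun A a ha => KclAux.mem_kcl_self F ha,
    fun A B hAB => KclAux.kcl_mono F hAB,
    fun A => Set.Subset.antisymm (KclAux.kcl_idem F)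
      (fun a ha => KclAux.mem_kcl_self F ha),
    fun A a ha => KclAux.kcl_finchar F ha⟩
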